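/- Let $C$ be a vector space over a field $k$ of characteristic zero with a linear map $D: C \to C$ and bilinear products $\oo{n}: C \times C \to C$ for $n \in \mathbb{Z}_{\geq 0}$ satisfying the conformal axioms. Then the left associativity identity $(u \oo{n} v) \oo{m} w = \sum_{s=0}^{n} (-1)^s \binom{n}{s} u \oo{n-s} (v \oo{m+s} w)$ holding for all $n, m \geq 0$ and all $u, v, w \in C$ is equivalent to the right associativity identity $u \oo{n} (v \oo{m} w) = \sum_{s \geq 0} \binom{n}{s} (u \oo{n-s} v) \oo{m+s} w$ holding for all $n, m \geq 0$ and all $u, v, w \in C$. -/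

import Mathlib

open Finset

lemma conformal_tri_sum {M : Type*} [AddCommMonoid M] (n : ℕ) (a : ℕ → ℕ → M) :
    ∑ s ∈ range (n + 1), ∑ t ∈ range (n - s + 1), a s t
      = ∑ r ∈ range (n + 1), ∑ s ∈ range (r + 1), a s (r - s) := by
  rw [Finset.sum_sigma', Finset.sum_sigma']
  apply Finset.sum_bij' (fun p _ => (⟨p.1 + p.2, p.1⟩ : Σ _ : ℕ, ℕ))
    (fun p _ => (⟨p.2, p.1 - p.2⟩ : Σ _ : ℕ, ℕ))
  · intro p hp; simp only [mem_sigma, mem_range] at hp ⊢; omega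
  · intro p hp; simp only [mem_sigma, mem_range] at hp ⊢; omega
  · intro p hp; simp only [mem_sigma, mem_range] at hp; ext <;> simp <;> omega
  · intro p hp; simp only [mem_sigma, mem_range] at hp; ext <;> simp <;> omega
  · intro p hp; simp

lemma conformal_alt_sum {k : Type*} [Field k] (r : ℕ) :
    ∑ s ∈ range (r + 1), ((-1 : k) ^ s * (r.choose s : k)) = if r = 0 then 1 else 0 := by
  have h := Int.alternating_sum_range_choose (n := r)
  have h2 := congrArg (Int.cast : ℤ → k) h
  push_cast at h2
  rw [h2]

lemma conformal_key {k : Type*} [Field k] {C : Type*} [AddCommGroup C] [Module k C]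
    (ε : k) (F G : ℕ → ℕ → C)
    (h : ∀ n m, F n m = ∑ s ∈ range (n + 1),
        (ε ^ s * (n.choose s : k)) • G (n - s) (m + s)) :
    ∀ n m, G n m = ∑ s ∈ range (n + 1),
        ((-ε) ^ s * (n.choose s : k)) • F (n - s) (m + s) := by
  intro n m
  have step1 : ∑ s ∈ range (n + 1), ((-ε) ^ s * (n.choose s : k)) • F (n - s) (m + s)
      = ∑ s ∈ range (n + 1), ∑ t ∈ range (n - s + 1),
          (((-ε) ^ s * (n.choose s : k)) * (ε ^ t * ((n - s).choose t : k)))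
            • G (n - s - t) (m + s + t) := by
    refine Finset.sum_congr rfl fun s hs => ?_
    rw [h (n - s) (m + s), Finset.smul_sum]
    refine Finset.sum_congr rfl fun t ht => ?_
    rw [smul_smul]
  rw [step1, conformal_tri_sum n
    (fun s t => (((-ε) ^ s * (n.choose s : k)) * (ε ^ t * ((n - s).choose t : k)))
            • G (n - s - t) (m + s + t))]
  have step2 : ∀ r ∈ range (n + 1), ∑ s ∈ range (r + 1),
      (((-ε) ^ s * (n.choose s : k)) * (ε ^ (r - s) * ((n - s).choose (r - s) : k)))
        • G (n - s - (r - s)) (m + s + (r - s))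
      = (if r = 0 then (1 : k) else 0) • G (n - r) (m + r) := by
    intro r hr
    rw [mem_range] at hr
    have hrn : r ≤ n := by omega
    have : ∀ s ∈ range (r + 1),
        (((-ε) ^ s * (n.choose s : k)) * (ε ^ (r - s) * ((n - s).choose (r - s) : k)))
          • G (n - s - (r - s)) (m + s + (r - s))
        = ((ε ^ r * (n.choose r : k)) * ((-1 : k) ^ s * (r.choose s : k))) • G (n - r) (m + r) := by
      intro s hs
      rw [mem_range] at hs
      have hsr : s ≤ r := by omega
      have hch : (n.choose s : k) * ((n - s).choose (r - s) : k)
          = (n.choose r : k) * (r.choose s : k) := by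
        rw [← Nat.cast_mul, ← Nat.cast_mul, ← Nat.choose_mul (n := n) hsr]
      have hidx1 : n - s - (r - s) = n - r := by omega
      have hidx2 : m + s + (r - s) = m + r := by omega
      have hpow : ε ^ s * ε ^ (r - s) = ε ^ r := by
        rw [← pow_add]; congr 1; omega
      rw [hidx1, hidx2]
      congr 1
      rw [neg_pow]
      calc (-1 : k) ^ s * ε ^ s * (n.choose s : k) * (ε ^ (r - s) * ((n - s).choose (r - s) : k))
          = (ε ^ s * ε ^ (r - s)) * ((n.choose s : k) * ((n - s).choose (r - s) : k))
              * (-1 : k) ^ s := by ring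
        _ = ε ^ r * ((n.choose r : k) * (r.choose s : k)) * (-1 : k) ^ s := by rw [hpow, hch]
        _ = _ := by ring
    rw [Finset.sum_congr rfl this, ← Finset.sum_smul, ← Finset.mul_sum, conformal_alt_sum]
    split
    · next h0 => subst h0; simp
    · simp
  rw [Finset.sum_congr rfl step2]
  simp [ite_smul]

theorem conformal_assoc_left_iff_right
    {k : Type*} [Field k] [CharZero k]
    {C : Type*} [AddCommGroup C] [Module k C]
    (Dop : C →ₗ[k] C) (mul : ℕ → C →ₗ[k] C →ₗ[k] C)
    (hloc : ∀ x y : C, ∃ N : ℕ, ∀ n ≥ N, mul n x y = 0)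
    (hC2 : ∀ (n : ℕ) (x y : C),
      mul n x (Dop y) = Dop (mul n x y) + (n : k) • mul (n - 1) x y)
    (hC3 : ∀ (n : ℕ) (x y : C),
      mul n (Dop x) y = -((n : k)) • mul (n - 1) x y) :
    (∀ (n m : ℕ) (u v w : C),
        mul m (mul n u v) w =
          ∑ s ∈ range (n + 1),
            ((-1 : k) ^ s * (n.choose s : k)) • mul (n - s) u (mul (m + s) v w))
      ↔
    (∀ (n m : ℕ) (u v w : C),
        mul n u (mul m v w) =
          ∑ s ∈ range (n + 1),
            ((n.choose s : k)) • mul (m + s) (mul (n - s) u v) w) := by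
  constructor
  · intro hleft n m u v w
    have := conformal_key (-1 : k)
      (fun n m => mul m (mul n u v) w) (fun n m => mul n u (mul m v w))
      (fun n m => hleft n m u v w) n m
    simpa using this
  · intro hright n m u v w
    have := conformal_key (1 : k)
      (fun n m => mul n u (mul m v w)) (fun n m => mul m (mul n u v) w)
      (fun n m => by simpa using hright n m u v w) n m
    simpa using this
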